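/- Let q be a power of 2, let δ ∈ F_{q²}* with δ ≠ 1 and let n be the multiplicative order of δ. Set c = δ + δ^{-1} and define the sequence (v_i) in F_{q²} by v_{−1} = 0, v_0 = 1 and v_i = c·v_{i−1} + v_{i−2} for i ≥ 1. Then for every integer i ≥ 1, v_{i−1} = 0 if and only if n divides i, and whenever n divides i one has v_i = 1. In particular, the matrix C = [[c, 1], [1, 0]] ∈ GL₂(F_{q²}) has order n. -/

import Mathlib

/-- Let `q` be a power of `2`, let `δ ∈ F_{q²}*` with `δ ≠ 1` and let
`n` be the multiplicative order of `δ`.  Set `c = δ + δ⁻¹` and define the sequence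
`(v i)` in `F_{q²}` by `v (-1) = 0`, `v 0 = 1` and `v i = c * v (i-1) + v (i-2)` for
`i ≥ 1`.  Then for every integer `i ≥ 1`, `v (i-1) = 0` if and only if `n ∣ i`, and
whenever `n ∣ i` (with `i ≥ 0`) one has `v i = 1`.  In particular, the matrix
`C = [[c, 1], [1, 0]]` has order `n`. -/
theorem stmt_19 (q : ℕ) (hq : ∃ k : ℕ, 0 < k ∧ q = 2 ^ k)
    (F : Type*) [Field F] [Fintype F] (hcard : Fintype.card F = q ^ 2)
    (δ : F) (hδ0 : δ ≠ 0) (hδ1 : δ ≠ 1) (n : ℕ) (hn : n = orderOf δ)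
    (c : F) (hc : c = δ + δ⁻¹) (v : ℤ → F)
    (hvm1 : v (-1) = 0) (hv0 : v 0 = 1)
    (hrec : ∀ i : ℤ, 1 ≤ i → v i = c * v (i - 1) + v (i - 2)) :
    (∀ i : ℤ, 1 ≤ i → (v (i - 1) = 0 ↔ (n : ℤ) ∣ i)) ∧
    (∀ i : ℤ, 0 ≤ i → (n : ℤ) ∣ i → v i = 1) ∧
    orderOf (!![c, 1; 1, 0] : Matrix (Fin 2) (Fin 2) F) = n := by
  obtain ⟨k, hk, rfl⟩ := hq
  -- characteristic 2
  have h2 : (2 : F) = 0 := by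
    have hcc := FiniteField.cast_card_eq_zero F
    rw [hcard] at hcc
    push_cast at hcc
    have h22 : (2 : F) ^ (k * 2) = 0 := by
      rw [pow_mul]; exact hcc
    have hk2 : k * 2 ≠ 0 := by omega
    exact (pow_eq_zero_iff hk2).mp h22
  have hadd : ∀ a b : F, a + b = 0 ↔ a = b := by
    intro a b
    constructor <;> intro h
    · linear_combination h - b * h2
    · linear_combination h + b * h2
  have hδinv : δ * δ⁻¹ = 1 := mul_inv_cancel₀ hδ0
  have hc0 : c ≠ 0 := by
    intro h
    apply hδ1
    have h1 : δ = δ⁻¹ := (hadd δ δ⁻¹).mp (by rw [← hc]; exact h)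
    have hsq : δ * δ = 1 := by nth_rewrite 2 [h1]; exact hδinv
    have hz : (δ - 1) ^ 2 = 0 := by linear_combination hsq + (1 - δ) * h2
    have := (pow_eq_zero_iff (by norm_num : (2:ℕ) ≠ 0)).mp hz
    exact sub_eq_zero.mp this
  -- closed form
  have key : ∀ m : ℕ, v ((m : ℤ) - 1) = (δ ^ m + δ⁻¹ ^ m) / c := by
    intro m
    induction m using Nat.strong_induction_on with
    | _ m ih =>
      match m with
      | 0 =>
        simp only [Nat.cast_zero, zero_sub, pow_zero]
        rw [hvm1, one_add_one_eq_two, h2, zero_div]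
      | 1 =>
        simp only [Nat.cast_one, sub_self, pow_one, hv0, ← hc]
        rw [div_self hc0]
      | (m + 2) =>
        have h1 := ih (m + 1) (by omega)
        have h0 := ih m (by omega)
        have hr := hrec ((m : ℤ) + 1) (by omega)
        have e1 : ((m : ℤ) + 1) - 1 = ((m + 1 : ℕ) : ℤ) - 1 := by push_cast [Nat.cast_add]; ring
        have e2 : ((m : ℤ) + 1) - 2 = ((m : ℕ) : ℤ) - 1 := by push_cast; ring
        have e3 : ((m + 2 : ℕ) : ℤ) - 1 = (m : ℤ) + 1 := by push_cast; ring
        have num : c * (δ ^ (m+1) + δ⁻¹ ^ (m+1)) + (δ ^ m + δ⁻¹ ^ m)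
            = δ ^ (m+2) + δ⁻¹ ^ (m+2) := by
          rw [hc]
          linear_combination (δ⁻¹ ^ m + δ ^ m) * hδinv + (δ⁻¹ ^ m + δ ^ m) * h2
        have comb : c * ((δ ^ (m+1) + δ⁻¹ ^ (m+1)) / c) + (δ ^ m + δ⁻¹ ^ m) / c
            = (c * (δ ^ (m+1) + δ⁻¹ ^ (m+1)) + (δ ^ m + δ⁻¹ ^ m)) / c := by
          rw [← mul_div_assoc, ← add_div]
        rw [e3, hr, e1, e2, h1, h0, comb, num]
  -- order facts
  set u : Fˣ := Units.mk0 δ hδ0 with hu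
  have hnu : n = orderOf u := by rw [hn, ← orderOf_units]; rfl
  have hn0 : 0 < n := by rw [hnu]; exact orderOf_pos u
  have hndvd : n ∣ 2 ^ k * 2 ^ k - 1 := by
    have hdc := orderOf_dvd_natCard u
    rw [Nat.card_units, Nat.card_eq_fintype_card, hcard] at hdc
    rw [hnu]
    convert hdc using 2
    ring
  have hodd : Odd n := by
    rcases Nat.even_or_odd n with he | ho
    · exfalso
      have h2n : 2 ∣ n := he.two_dvd
      have : 2 ∣ 2 ^ k * 2 ^ k - 1 := h2n.trans hndvd
      have hpow : 2 ∣ 2 ^ k * 2 ^ k := (dvd_pow_self 2 hk.ne').mul_right _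
      have hpos : 1 ≤ 2 ^ k * 2 ^ k := Nat.one_le_iff_ne_zero.mpr (by positivity)
      omega
    · exact ho
  have hpow_iff : ∀ m : ℕ, δ ^ m = 1 ↔ n ∣ m := by
    intro m
    rw [hn]
    exact (orderOf_dvd_iff_pow_eq_one).symm
  -- the zero criterion for natural indices
  have hzero_iff : ∀ m : ℕ, (v ((m : ℤ) - 1) = 0 ↔ n ∣ m) := by
    intro m
    rw [key m, div_eq_zero_iff]
    have ha : δ ^ m ≠ 0 := pow_ne_zero _ hδ0
    constructor
    · rintro (h | h)
      · have h1 : δ ^ m = (δ ^ m)⁻¹ := by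
          rw [← inv_pow]; exact (hadd _ _).mp h
        have hsq : δ ^ m * δ ^ m = 1 := by
          nth_rewrite 2 [h1]; exact mul_inv_cancel₀ ha
        have h2m : δ ^ (2 * m) = 1 := by rw [two_mul, pow_add]; exact hsq
        have hd2 : n ∣ 2 * m := (hpow_iff _).mp h2m
        have hcop : Nat.Coprime n 2 := Nat.coprime_two_right.mpr hodd
        exact (Nat.Coprime.dvd_of_dvd_mul_left hcop (by rwa [] at hd2))
      · exact absurd h hc0
    · intro h
      left
      have h1 : δ ^ m = 1 := (hpow_iff _).mpr h
      rw [h1, inv_pow, h1, inv_one, one_add_one_eq_two]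
      exact h2
  -- value 1 at multiples of n
  have hv1 : ∀ m : ℕ, n ∣ m → v (m : ℤ) = 1 := by
    intro m hm
    have hkey := key (m + 1)
    have hcast : ((m + 1 : ℕ) : ℤ) - 1 = (m : ℤ) := by push_cast; ring
    rw [hcast] at hkey
    have h1 : δ ^ m = 1 := (hpow_iff m).mpr hm
    rw [hkey, pow_succ, pow_succ, inv_pow, h1, inv_one, one_mul, one_mul, ← hc,
      div_self hc0]
  -- powers of the matrix
  have Cpow : ∀ m : ℕ, (!![c, 1; 1, 0] : Matrix (Fin 2) (Fin 2) F) ^ (m + 1)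
      = !![v ((m : ℤ) + 1), v (m : ℤ); v (m : ℤ), v ((m : ℤ) - 1)] := by
    intro m
    induction m with
    | zero =>
      have hr := hrec 1 le_rfl
      norm_num at hr
      rw [hv0, hvm1, mul_one] at hr
      norm_num [pow_one, hr, hv0, hvm1]
    | succ m ih =>
      have r1 := hrec ((m : ℤ) + 1) (by omega)
      have r2 := hrec ((m : ℤ) + 1 + 1) (by omega)
      rw [show (m : ℤ) + 1 - 1 = (m : ℤ) from by ring,
        show (m : ℤ) + 1 - 2 = (m : ℤ) - 1 from by ring] at r1
      rw [show (m : ℤ) + 1 + 1 - 1 = (m : ℤ) + 1 from by ring,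
        show (m : ℤ) + 1 + 1 - 2 = (m : ℤ) from by ring, r1] at r2
      rw [pow_succ, ih]
      push_cast
      rw [show (m : ℤ) + 1 - 1 = (m : ℤ) from by ring]
      rw [r2, r1]
      ext i j
      fin_cases i <;> fin_cases j <;>
        simp [Matrix.mul_apply, Fin.sum_univ_succ] <;> ring
  -- C^n = 1
  set C : Matrix (Fin 2) (Fin 2) F := !![c, 1; 1, 0] with hC
  have hδn : δ ^ n = 1 := (hpow_iff n).mpr dvd_rfl
  have hCn : C ^ n = 1 := by
    obtain ⟨m, rfl⟩ : ∃ m, n = m + 1 := ⟨n - 1, by omega⟩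
    rw [Cpow m]
    have hz : v ((m : ℤ)) = 0 := by
      have := (hzero_iff (m + 1)).mpr dvd_rfl
      rwa [show ((m + 1 : ℕ) : ℤ) - 1 = (m : ℤ) from by push_cast; ring] at this
    have h1' : v ((m : ℤ) + 1) = 1 := by
      have := hv1 (m + 1) dvd_rfl
      rwa [show ((m + 1 : ℕ) : ℤ) = (m : ℤ) + 1 from by push_cast; ring] at this
    have hδm : δ ^ m = δ⁻¹ := eq_inv_of_mul_eq_one_left (by rw [← pow_succ]; exact hδn)
    have hlast : v ((m : ℤ) - 1) = 1 := by
      rw [key m, hδm, inv_pow, hδm, inv_inv, show δ⁻¹ + δ = c from by rw [hc, add_comm],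
        div_self hc0]
    rw [hz, h1', hlast]
    exact Matrix.one_fin_two.symm
  have hdvd1 : orderOf C ∣ n := orderOf_dvd_of_pow_eq_one hCn
  have hm0 : orderOf C ≠ 0 := by
    intro h
    rw [h] at hdvd1
    exact hn0.ne' (Nat.eq_zero_of_zero_dvd hdvd1)
  refine ⟨?_, ?_, ?_⟩
  · intro i hi
    lift i to ℕ using (by omega)
    rw [Int.natCast_dvd_natCast]
    exact hzero_iff i
  · intro i hi hdvd
    lift i to ℕ using hi
    rw [Int.natCast_dvd_natCast] at hdvd
    exact hv1 i hdvd
  · obtain ⟨m, hm⟩ : ∃ m, orderOf C = m + 1 := ⟨orderOf C - 1, by omega⟩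
    have hCm := pow_orderOf_eq_one C
    rw [hm, Cpow m] at hCm
    have hz : v ((m : ℤ)) = 0 := by
      have := congrFun (congrFun hCm 0) 1
      simpa [Matrix.one_apply] using this
    have hnd : n ∣ m + 1 := (hzero_iff (m + 1)).mp
      (by rwa [show ((m + 1 : ℕ) : ℤ) - 1 = (m : ℤ) from by push_cast; ring])
    exact Nat.dvd_antisymm hdvd1 (hm ▸ hnd)
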